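/- Let the sortition instance be κ-rich with n pool members and panel size k ≥ 1, and let c ≤ κ'·n for some 0 ≤ κ' < κ. Then the composition manipulability of uniform panel selection (MaxEntropy) satisfies: for every coalition C of size c, every joint misreport, and every feature-value pair (f,v), Σ_{i ∈ N : f(i) = v} (π̃(i) − π(i)) ≤ (u_{f,v} − ℓ_{f,v}) + c·k/((κ−κ')^k · n), where π and π̃ are selection probabilities under the uniform distributions over the true and manipulated panel sets and f(i) refers to the true feature values. -/

import Mathlib

open scoped Classical


lemma aux_swap {N : Type*} [DecidableEq N] (Q : Finset (Finset N)) (S : Finset N) :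
    ∑ i ∈ S, (Q.filter fun P => i ∈ P).card = ∑ P ∈ Q, (S.filter fun i => i ∈ P).card := by
  simp only [Finset.card_filter]
  exact Finset.sum_comm

lemma aux_pow_le_desc (a m : ℕ) (r : ℝ) (hr : 0 ≤ r) (h : r + m ≤ a) :
    r ^ m ≤ (a.descFactorial m : ℝ) := by
  induction m with
  | zero => simp
  | succ m ih =>
    have hm : (m : ℝ) + 1 ≤ a := by push_cast at h ⊢; linarith
    have hma : m < a := by exact_mod_cast hm
    rw [Nat.descFactorial_succ]
    push_cast [Nat.cast_sub hma.le]
    have h1 : r ^ m ≤ (a.descFactorial m : ℝ) := ih (by push_cast at h ⊢; linarith)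
    have h2 : r ≤ (a : ℝ) - m := by push_cast at h; linarith
    calc r ^ (m+1) = r * r ^ m := by ring
    _ ≤ ((a:ℝ) - m) * (a.descFactorial m : ℝ) :=
        mul_le_mul h2 h1 (pow_nonneg hr m) (by linarith)

lemma aux_fiber_count {N : Type*} {β : Type*} (feat : N → β) (W : Finset β) (P : Finset N)
    (hP : ∀ t ∈ P, feat t ∈ W) (p : β → Prop) :
    (P.filter fun t => p (feat t)).card
      = ∑ w ∈ W.filter p, (P.filter fun t => feat t = w).card := by
  have h1 : (P.filter fun t => p (feat t)).card
      = ∑ w ∈ W.filter p, ((P.filter fun t => p (feat t)).filter fun t => feat t = w).card := by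
    apply Finset.card_eq_sum_card_fiberwise
    intro x hx
    simp only [Finset.mem_coe, Finset.coe_filter, Finset.mem_filter, Set.mem_setOf_eq] at hx ⊢
    exact ⟨hP x hx.1, hx.2⟩
  rw [h1]
  apply Finset.sum_congr rfl
  intro w hw
  congr 1
  ext t
  simp only [Finset.mem_filter, Finset.mem_filter] at hw ⊢
  constructor
  · rintro ⟨⟨h1, _⟩, h3⟩; exact ⟨h1, h3⟩
  · rintro ⟨h1, h3⟩; exact ⟨⟨h1, h3 ▸ hw.2⟩, h3⟩

lemma aux_construct {N : Type*} [DecidableEq N] {β : Type*}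
    (feat : N → β) (W : Finset β) (m : β → ℕ) (A : β → Finset N)
    (hA : ∀ w ∈ W, ∀ t ∈ A w, feat t = w)
    (Pant : Finset (Finset N))
    (hgood : ∀ P : Finset N, (∀ t ∈ P, feat t ∈ W) →
        (∀ w ∈ W, (P.filter fun t => feat t = w).card = m w) →
        (∀ w ∈ W, P.filter (fun t => feat t = w) ⊆ A w) → P ∈ Pant) :
    ∏ w ∈ W, ((A w).card.choose (m w)) ≤ Pant.card := by
  classical
  set src := W.pi (fun w => (A w).powersetCard (m w)) with hsrc
  have hcard : src.card = ∏ w ∈ W, ((A w).card.choose (m w)) := by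
    rw [hsrc, Finset.card_pi]
    exact Finset.prod_congr rfl fun w _ => Finset.card_powersetCard _ _
  rw [← hcard]
  set g : ((w : β) → w ∈ W → Finset N) → Finset N :=
    fun S => W.attach.biUnion (fun x => S x.1 x.2) with hg
  have hfib : ∀ S ∈ src, ∀ w (hw : w ∈ W),
      (g S).filter (fun t => feat t = w) = S w hw := by
    intro S hS w hw
    rw [Finset.mem_pi] at hS
    ext t
    simp only [Finset.mem_filter, hg, Finset.mem_biUnion, Finset.mem_attach, true_and]
    constructor
    · rintro ⟨⟨⟨w', hw'⟩, ht⟩, hft⟩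
      have hsub := (Finset.mem_powersetCard.mp (hS w' hw')).1
      have : feat t = w' := hA w' hw' t (hsub ht)
      have hww : w' = w := by rw [← this, hft]
      subst hww
      exact ht
    · intro ht
      have hsub := (Finset.mem_powersetCard.mp (hS w hw)).1
      exact ⟨⟨⟨w, hw⟩, ht⟩, hA w hw t (hsub ht)⟩
  apply Finset.card_le_card_of_injOn g
  · intro S hS
    rw [Finset.mem_coe, Finset.mem_pi] at hS
    rw [Finset.mem_coe]
    apply hgood
    · intro t ht
      simp only [hg, Finset.mem_biUnion, Finset.mem_attach, true_and] at ht
      obtain ⟨⟨w', hw'⟩, ht⟩ := ht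
      have hsub := (Finset.mem_powersetCard.mp (hS w' hw')).1
      rw [hA w' hw' t (hsub ht)]
      exact hw'
    · intro w hw
      rw [hfib S (by rwa [Finset.mem_pi]) w hw]
      exact (Finset.mem_powersetCard.mp (hS w hw)).2
    · intro w hw
      rw [hfib S (by rwa [Finset.mem_pi]) w hw]
      exact (Finset.mem_powersetCard.mp (hS w hw)).1
  · intro S hS S' hS' h
    funext w hw
    rw [← hfib S hS w hw, ← hfib S' hS' w hw, h]

lemma aux_contain_le {N : Type*} [Fintype N] [DecidableEq N]
    (Pant : Finset (Finset N)) (k : ℕ)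
    (hcardk : ∀ P ∈ Pant, P.card = k) (i : N) :
    (Pant.filter fun P => i ∈ P).card ≤ (Fintype.card N - 1).choose (k - 1) := by
  have h := Finset.card_le_card_of_injOn (fun P => P.erase i)
    (s := Pant.filter fun P => i ∈ P)
    (t := (Finset.univ.erase i).powersetCard (k - 1)) ?_ ?_
  · rwa [Finset.card_powersetCard, Finset.card_erase_of_mem (Finset.mem_univ i),
      Finset.card_univ] at h
  · intro P hP
    rw [Finset.mem_coe, Finset.mem_filter] at hP
    rw [Finset.mem_coe, Finset.mem_powersetCard]
    constructor
    · intro t ht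
      rw [Finset.mem_erase] at ht ⊢
      exact ⟨ht.1, Finset.mem_univ t⟩
    · rw [Finset.card_erase_of_mem hP.2, hcardk P hP.1]
  · intro P hP Q hQ h
    simp only [Finset.coe_filter, Set.mem_setOf_eq] at hP hQ
    rw [← Finset.insert_erase hP.2, ← Finset.insert_erase hQ.2]
    simp only at h
    rw [h]

lemma aux_comb (n k : ℕ) (hk : 1 ≤ k) :
    ((n - 1).choose (k - 1)) * k.factorial ≤ k * n ^ (k - 1) := by
  obtain ⟨k', rfl⟩ : ∃ k', k = k' + 1 := ⟨k - 1, (Nat.succ_pred_eq_of_pos hk).symm⟩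
  simp only [Nat.add_sub_cancel]
  calc (n - 1).choose k' * (k' + 1).factorial
      = (k' + 1) * (k'.factorial * (n - 1).choose k') := by
        rw [Nat.factorial_succ]; ring
    _ = (k' + 1) * ((n-1).descFactorial k') := by
        rw [Nat.descFactorial_eq_factorial_mul_choose]
    _ ≤ (k' + 1) * (n - 1) ^ k' := Nat.mul_le_mul_left _ (Nat.descFactorial_le_pow _ _)
    _ ≤ (k' + 1) * n ^ k' :=
        Nat.mul_le_mul_left _ (Nat.pow_le_pow_left (Nat.sub_le n 1) k')

lemma aux_prod_bound {β : Type*} (W : Finset β) (m : β → ℕ) (a : β → ℕ) (k : ℕ)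
    (hsum : ∑ w ∈ W, m w = k) (r : ℝ) (hr : 0 ≤ r)
    (h : ∀ w ∈ W, r + m w ≤ a w) :
    r ^ k ≤ (k.factorial : ℝ) * ∏ w ∈ W, ((a w).choose (m w) : ℝ) := by
  calc r ^ k = ∏ w ∈ W, r ^ m w := by rw [Finset.prod_pow_eq_pow_sum, hsum]
    _ ≤ ∏ w ∈ W, ((a w).descFactorial (m w) : ℝ) :=
        Finset.prod_le_prod (fun w _ => pow_nonneg hr _)
          (fun w hw => aux_pow_le_desc _ _ r hr (h w hw))
    _ = (∏ w ∈ W, ((m w).factorial : ℝ)) * ∏ w ∈ W, ((a w).choose (m w) : ℝ) := by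
        rw [← Finset.prod_mul_distrib]
        exact Finset.prod_congr rfl fun w _ => by
          rw [Nat.descFactorial_eq_factorial_mul_choose]; push_cast; ring
    _ ≤ (k.factorial : ℝ) * ∏ w ∈ W, ((a w).choose (m w) : ℝ) := by
        apply mul_le_mul_of_nonneg_right
        · have : ∏ w ∈ W, (m w).factorial ≤ k.factorial := by
            rw [← hsum]
            exact Nat.le_of_dvd (Nat.factorial_pos _)
              (Nat.prod_factorial_dvd_factorial_sum _ _)
          exact_mod_cast this
        · positivity

set_option maxHeartbeats 1000000

/-- A sortition instance (features `feat`, panel set `Pan`, panel size `k`) is `κ`-rich if there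
is a set `Wstar` of feature-value vectors present in the pool such that every vector in `Wstar`
is shared by at least `κ·n + k` pool members, and some panel consists solely of members with
vectors in `Wstar`. -/
def IsRich {N : Type*} [Fintype N] {F : Type*} {V : F → Type*}
    (feat : N → ∀ f : F, V f) (Pan : Finset (Finset N)) (k : ℕ) (κ : ℝ) : Prop :=
  ∃ Wstar : Set (∀ f : F, V f),
    (∀ wv ∈ Wstar, ∃ i : N, feat i = wv) ∧
    (∀ wv ∈ Wstar,
      κ * (Fintype.card N) + k ≤ ((Finset.univ.filter fun i : N => feat i = wv).card : ℝ)) ∧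
    ∃ P₀ ∈ Pan, ∀ i ∈ P₀, feat i ∈ Wstar

/-- Composition manipulability of uniform (MaxEntropy) panel selection: in a
`κ`-rich instance with `n` pool members and panel size `k ≥ 1`, for every coalition `C` of size
`c ≤ κ'·n` (with `0 ≤ κ' < κ`), every joint misreport `feat'` (agreeing with `feat` off `C`),
and every feature-value pair `(f0, v0)`, the expected number of seats gained by the group
`{i : feat i f0 = v0}` (true feature values) under the uniform distributions over the
manipulated and true panel sets is at most `(u_{f0,v0} − ℓ_{f0,v0}) + c·k/((κ−κ')^k · n)`. -/
theorem composition_manipulability_bound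
    {N : Type*} [Fintype N] [DecidableEq N]
    {F : Type*} {V : F → Type*}
    (feat : N → ∀ f : F, V f) (k : ℕ) (hk : 1 ≤ k)
    (ℓ u : ((f : F) × V f) → ℕ) (hℓu : ∀ fv, ℓ fv ≤ u fv) (huk : ∀ fv, u fv ≤ k)
    (Pan : Finset (Finset N))
    (hPan : Pan = Finset.univ.filter fun P : Finset N =>
      P.card = k ∧ ∀ (f : F) (v : V f),
        ℓ ⟨f, v⟩ ≤ (P.filter fun t => feat t f = v).card ∧
        (P.filter fun t => feat t f = v).card ≤ u ⟨f, v⟩)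
    (κ κ' : ℝ) (hκ : 0 < κ) (hκ'0 : 0 ≤ κ') (hκ' : κ' < κ)
    (hrich : IsRich feat Pan k κ) :
    ∀ (feat' : N → ∀ f : F, V f) (C : Finset N),
      (C.card : ℝ) ≤ κ' * Fintype.card N →
      (∀ i ∉ C, feat' i = feat i) →
      ∀ Pant : Finset (Finset N),
        Pant = (Finset.univ.filter fun P : Finset N =>
          P.card = k ∧ ∀ (f : F) (v : V f),
            ℓ ⟨f, v⟩ ≤ (P.filter fun t => feat' t f = v).card ∧
            (P.filter fun t => feat' t f = v).card ≤ u ⟨f, v⟩) →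
        ∀ (f0 : F) (v0 : V f0),
          ∑ i ∈ Finset.univ.filter (fun i => feat i f0 = v0),
              (((Pant.filter fun P => i ∈ P).card : ℝ) / Pant.card -
                ((Pan.filter fun P => i ∈ P).card : ℝ) / Pan.card) ≤
            ((u ⟨f0, v0⟩ : ℝ) - (ℓ ⟨f0, v0⟩ : ℝ)) +
              C.card * k / ((κ - κ') ^ k * Fintype.card N) := by
  intro feat' C hCcard hCfeat Pant hPant' f0 v0
  obtain ⟨Wstar, hW1, hW2, P₀, hP₀Pan, hP₀W⟩ := hrich
  have hP₀Pan' := hP₀Pan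
  rw [hPan, Finset.mem_filter] at hP₀Pan'
  obtain ⟨-, hP₀k, hP₀q⟩ := hP₀Pan'
  have hP₀ne : P₀.Nonempty := by
    rw [← Finset.card_pos, hP₀k]; omega
  have hn : 0 < Fintype.card N := by
    obtain ⟨i0, _⟩ := hP₀ne
    exact Fintype.card_pos_iff.mpr ⟨i0⟩
  have hnR : (0:ℝ) < Fintype.card N := by exact_mod_cast hn
  have hκκ' : (0:ℝ) < κ - κ' := by linarith
  set r : ℝ := (κ - κ') * (Fintype.card N) with hr_def
  have hrpos : 0 < r := mul_pos hκκ' hnR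
  set W : Finset (∀ f : F, V f) := P₀.image feat with hW_def
  set m : (∀ f : F, V f) → ℕ := fun w => (P₀.filter fun t => feat t = w).card with hm_def
  set A : (∀ f : F, V f) → Finset N :=
    fun w => (Finset.univ.filter fun i : N => feat i = w) \ C with hA_def
  have hP₀mem : ∀ t ∈ P₀, feat t ∈ W := fun t ht => Finset.mem_image_of_mem feat ht
  have hsum : ∑ w ∈ W, m w = k := by
    rw [← hP₀k]
    exact (Finset.card_eq_sum_card_fiberwise hP₀mem).symm
  have hmk : ∀ w ∈ W, m w ≤ k := fun w hw =>
    hsum ▸ Finset.single_le_sum (fun _ _ => Nat.zero_le _) hw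
  have hAfeat : ∀ w ∈ W, ∀ t ∈ A w, feat t = w := by
    intro w _ t ht
    rw [hA_def] at ht
    simp only [Finset.mem_sdiff, Finset.mem_filter] at ht
    exact ht.1.2
  have hAC : ∀ w, ∀ t ∈ A w, t ∉ C := by
    intro w t ht
    rw [hA_def] at ht
    exact (Finset.mem_sdiff.mp ht).2
  have hAcard : ∀ w ∈ W, r + k ≤ ((A w).card : ℝ) := by
    intro w hw
    obtain ⟨i0, hi0, hfi0⟩ := Finset.mem_image.mp hw
    have hwW : w ∈ Wstar := hfi0 ▸ hP₀W i0 hi0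
    have h2 := hW2 w hwW
    have hsub : (Finset.univ.filter fun i : N => feat i = w) ⊆ A w ∪ C := by
      intro t ht
      rw [Finset.mem_union, hA_def, Finset.mem_sdiff]
      by_cases htC : t ∈ C
      · exact Or.inr htC
      · exact Or.inl ⟨ht, htC⟩
    have h3 : ((Finset.univ.filter fun i : N => feat i = w).card : ℝ)
        ≤ (A w).card + C.card := by
      have := (Finset.card_le_card hsub).trans (Finset.card_union_le _ _)
      exact_mod_cast this
    rw [hr_def]
    linarith
  have hPantk : ∀ P ∈ Pant, P.card = k := by
    intro P hP
    rw [hPant', Finset.mem_filter] at hP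
    exact hP.2.1
  have hPantq : ∀ P ∈ Pant, ∀ (f : F) (v : V f),
      ℓ ⟨f, v⟩ ≤ (P.filter fun t => feat' t f = v).card ∧
      (P.filter fun t => feat' t f = v).card ≤ u ⟨f, v⟩ := by
    intro P hP
    rw [hPant', Finset.mem_filter] at hP
    exact hP.2.2
  -- lower bound on the number of manipulated panels
  have hPantLow : ∏ w ∈ W, ((A w).card.choose (m w)) ≤ Pant.card := by
    apply aux_construct feat W m A hAfeat Pant
    intro P h1 h2 h3
    have hPC : ∀ t ∈ P, t ∉ C := by
      intro t ht
      have htf : t ∈ P.filter (fun s => feat s = feat t) :=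
        Finset.mem_filter.mpr ⟨ht, rfl⟩
      exact hAC (feat t) t (h3 (feat t) (h1 t ht) htf)
    rw [hPant', Finset.mem_filter]
    refine ⟨Finset.mem_univ P, ?_, fun f v => ?_⟩
    · calc P.card = ∑ w ∈ W, (P.filter fun t => feat t = w).card :=
            Finset.card_eq_sum_card_fiberwise h1
        _ = ∑ w ∈ W, m w := Finset.sum_congr rfl h2
        _ = k := hsum
    · have heq : P.filter (fun t => feat' t f = v) = P.filter (fun t => feat t f = v) := by
        apply Finset.filter_congr
        intro t ht
        rw [hCfeat t (hPC t ht)]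
      rw [heq]
      have h4 : (P.filter fun t => feat t f = v).card
          = ∑ w ∈ W.filter (fun w => w f = v), m w := by
        rw [aux_fiber_count feat W P h1 (fun w => w f = v)]
        exact Finset.sum_congr rfl (fun w hw => h2 w (Finset.mem_filter.mp hw).1)
      have h5 : (P₀.filter fun t => feat t f = v).card
          = ∑ w ∈ W.filter (fun w => w f = v), m w :=
        aux_fiber_count feat W P₀ hP₀mem (fun w => w f = v)
      rw [h4, ← h5]
      exact hP₀q f v
  -- key per-member bound
  have hkey : ∀ i : N, ((Pant.filter fun P => i ∈ P).card : ℝ) * r ^ k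
      ≤ (k : ℝ) * (Fintype.card N : ℝ) ^ (k - 1) * Pant.card := by
    intro i
    have h1 : ((Pant.filter fun P => i ∈ P).card : ℝ)
        ≤ ((Fintype.card N - 1).choose (k - 1) : ℝ) := by
      exact_mod_cast aux_contain_le Pant k hPantk i
    have h2 : r ^ k ≤ (k.factorial : ℝ) * ∏ w ∈ W, (((A w).card.choose (m w) : ℕ) : ℝ) := by
      apply aux_prod_bound W m (fun w => (A w).card) k hsum r hrpos.le
      intro w hw
      have ha := hAcard w hw
      have hb := hmk w hw
      have : (m w : ℝ) ≤ k := by exact_mod_cast hb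
      linarith
    have hprod_nonneg : (0:ℝ) ≤ ∏ w ∈ W, (((A w).card.choose (m w) : ℕ) : ℝ) := by
      positivity
    have h3 : (∏ w ∈ W, (((A w).card.choose (m w) : ℕ) : ℝ)) ≤ (Pant.card : ℝ) := by
      rw [← Nat.cast_prod]
      exact_mod_cast hPantLow
    have h4 : (((Fintype.card N - 1).choose (k - 1) : ℕ) : ℝ) * (k.factorial : ℝ)
        ≤ (k : ℝ) * (Fintype.card N : ℝ) ^ (k - 1) := by
      have := aux_comb (Fintype.card N) k hk
      exact_mod_cast this
    calc ((Pant.filter fun P => i ∈ P).card : ℝ) * r ^ k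
        ≤ (((Fintype.card N - 1).choose (k - 1) : ℕ) : ℝ)
            * ((k.factorial : ℝ) * ∏ w ∈ W, (((A w).card.choose (m w) : ℕ) : ℝ)) := by
          apply mul_le_mul h1 h2 (pow_nonneg hrpos.le _) (by positivity)
      _ = ((((Fintype.card N - 1).choose (k - 1) : ℕ) : ℝ) * (k.factorial : ℝ))
            * ∏ w ∈ W, (((A w).card.choose (m w) : ℕ) : ℝ) := by ring
      _ ≤ ((k : ℝ) * (Fintype.card N : ℝ) ^ (k - 1))
            * ∏ w ∈ W, (((A w).card.choose (m w) : ℕ) : ℝ) :=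
          mul_le_mul_of_nonneg_right h4 hprod_nonneg
      _ ≤ (k : ℝ) * (Fintype.card N : ℝ) ^ (k - 1) * Pant.card := by
          apply mul_le_mul_of_nonneg_left h3 (by positivity)
  -- the group under consideration
  set G := Finset.univ.filter (fun i : N => feat i f0 = v0) with hG_def
  have hGfilter : ∀ P : Finset N,
      (G.filter fun i => i ∈ P) = P.filter (fun t => feat t f0 = v0) := by
    intro P
    ext t
    simp only [hG_def, Finset.filter_filter, Finset.mem_filter, Finset.mem_univ, true_and]
    tauto
  have hPanpos : (0:ℝ) < Pan.card := by
    exact_mod_cast Finset.card_pos.mpr ⟨P₀, hP₀Pan⟩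
  have hdenom : (0:ℝ) < (κ - κ') ^ k * Fintype.card N :=
    mul_pos (pow_pos hκκ' k) hnR
  by_cases h0 : Pant.card = 0
  · -- no manipulated panel at all
    have hPe : Pant = ∅ := Finset.card_eq_zero.mp h0
    have hL : ∑ i ∈ G, (((Pant.filter fun P => i ∈ P).card : ℝ) / Pant.card -
        ((Pan.filter fun P => i ∈ P).card : ℝ) / Pan.card) ≤ 0 := by
      apply Finset.sum_nonpos
      intro i _
      rw [hPe]
      simp only [Finset.filter_empty, Finset.card_empty, Nat.cast_zero, zero_div]
      have : (0:ℝ) ≤ ((Pan.filter fun P => i ∈ P).card : ℝ) / Pan.card := by positivity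
      linarith
    have h1 : (ℓ ⟨f0,v0⟩ : ℝ) ≤ (u ⟨f0,v0⟩ : ℝ) := by exact_mod_cast hℓu ⟨f0,v0⟩
    have h2 : (0:ℝ) ≤ (C.card : ℝ) * k / ((κ - κ') ^ k * Fintype.card N) :=
      div_nonneg (by positivity) hdenom.le
    linarith
  · have hPantpos : (0:ℝ) < Pant.card := by exact_mod_cast Nat.pos_of_ne_zero h0
    -- lower bound on the true-panel side
    have hBpi : (ℓ ⟨f0,v0⟩ : ℝ)
        ≤ ∑ i ∈ G, ((Pan.filter fun P => i ∈ P).card : ℝ) / Pan.card := by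
      have e1 : ∑ i ∈ G, ((Pan.filter fun P => i ∈ P).card : ℝ) / Pan.card
          = ((∑ i ∈ G, (Pan.filter fun P => i ∈ P).card : ℕ) : ℝ) / Pan.card := by
        rw [← Finset.sum_div, Nat.cast_sum]
      rw [e1, le_div_iff₀ hPanpos]
      have e3 : ∀ P ∈ Pan, ℓ ⟨f0,v0⟩ ≤ (G.filter fun i => i ∈ P).card := by
        intro P hP
        rw [hGfilter P]
        rw [hPan, Finset.mem_filter] at hP
        exact (hP.2.2 f0 v0).1
      have e4 : Pan.card * ℓ ⟨f0,v0⟩ ≤ ∑ i ∈ G, (Pan.filter fun P => i ∈ P).card := by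
        rw [aux_swap Pan G]
        calc Pan.card * ℓ ⟨f0,v0⟩ = ∑ _P ∈ Pan, ℓ ⟨f0,v0⟩ := by
              rw [Finset.sum_const, smul_eq_mul]
          _ ≤ ∑ P ∈ Pan, (G.filter fun i => i ∈ P).card := Finset.sum_le_sum e3
      calc (ℓ ⟨f0,v0⟩ : ℝ) * Pan.card = ((Pan.card * ℓ ⟨f0,v0⟩ : ℕ) : ℝ) := by
            push_cast; ring
        _ ≤ _ := by exact_mod_cast e4
    -- upper bound on the manipulated-panel side
    have hBpit : ∑ i ∈ G, ((Pant.filter fun P => i ∈ P).card : ℝ) / Pant.card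
        ≤ (u ⟨f0,v0⟩ : ℝ) + (C.card : ℝ) * k / ((κ - κ') ^ k * Fintype.card N) := by
      set E : ℝ := (C.card : ℝ) * k / ((κ - κ') ^ k * Fintype.card N) with hE_def
      have hT : (∑ i ∈ C, ((Pant.filter fun P => i ∈ P).card : ℝ)) * r ^ k
          ≤ (C.card : ℝ) * ((k : ℝ) * (Fintype.card N : ℝ) ^ (k-1) * Pant.card) := by
        rw [Finset.sum_mul]
        calc ∑ i ∈ C, ((Pant.filter fun P => i ∈ P).card : ℝ) * r ^ k
            ≤ ∑ _i ∈ C, (k : ℝ) * (Fintype.card N : ℝ) ^ (k-1) * Pant.card :=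
              Finset.sum_le_sum (fun i _ => hkey i)
          _ = (C.card : ℝ) * ((k : ℝ) * (Fintype.card N : ℝ) ^ (k-1) * Pant.card) := by
              rw [Finset.sum_const, nsmul_eq_mul]
      have hErk : E * (r ^ k * Pant.card)
          = (C.card : ℝ) * ((k : ℝ) * (Fintype.card N : ℝ) ^ (k-1) * Pant.card) := by
        have hpow : ((Fintype.card N : ℝ)) ^ k
            = (Fintype.card N : ℝ) ^ (k-1) * Fintype.card N := by
          conv_lhs => rw [← Nat.succ_pred_eq_of_pos hk]
          rw [pow_succ, Nat.pred_eq_sub_one]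
        rw [hE_def, hr_def, mul_pow, hpow]
        field_simp
      have hTE : (∑ i ∈ C, ((Pant.filter fun P => i ∈ P).card : ℝ)) ≤ E * Pant.card := by
        have h5 : (∑ i ∈ C, ((Pant.filter fun P => i ∈ P).card : ℝ)) * r ^ k
            ≤ (E * Pant.card) * r ^ k := by
          rw [show (E * (Pant.card:ℝ)) * r ^ k = E * (r ^ k * Pant.card) by ring, hErk]
          exact hT
        exact le_of_mul_le_mul_right h5 (pow_pos hrpos k)
      have e1 : ∑ i ∈ G, ((Pant.filter fun P => i ∈ P).card : ℝ) / Pant.card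
          = ((∑ i ∈ G, (Pant.filter fun P => i ∈ P).card : ℕ) : ℝ) / Pant.card := by
        rw [← Finset.sum_div, Nat.cast_sum]
      rw [e1, div_le_iff₀ hPantpos]
      have e3 : ∀ P ∈ Pant, (G.filter fun i => i ∈ P).card
          ≤ u ⟨f0,v0⟩ + (C.filter fun i => i ∈ P).card := by
        intro P hP
        rw [hGfilter P]
        have hsub : P.filter (fun t => feat t f0 = v0)
            ⊆ (P.filter (fun t => feat' t f0 = v0)) ∪ (C.filter fun i => i ∈ P) := by
          intro t ht
          rw [Finset.mem_filter] at ht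
          rw [Finset.mem_union, Finset.mem_filter, Finset.mem_filter]
          by_cases htC : t ∈ C
          · exact Or.inr ⟨htC, ht.1⟩
          · exact Or.inl ⟨ht.1, by rw [hCfeat t htC]; exact ht.2⟩
        calc (P.filter (fun t => feat t f0 = v0)).card
            ≤ ((P.filter (fun t => feat' t f0 = v0)) ∪ (C.filter fun i => i ∈ P)).card :=
              Finset.card_le_card hsub
          _ ≤ (P.filter (fun t => feat' t f0 = v0)).card + (C.filter fun i => i ∈ P).card :=
              Finset.card_union_le _ _
          _ ≤ u ⟨f0,v0⟩ + (C.filter fun i => i ∈ P).card :=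
              Nat.add_le_add_right ((hPantq P hP f0 v0).2) _
      have e4 : (∑ i ∈ G, (Pant.filter fun P => i ∈ P).card)
          ≤ Pant.card * u ⟨f0,v0⟩ + ∑ i ∈ C, (Pant.filter fun P => i ∈ P).card := by
        calc ∑ i ∈ G, (Pant.filter fun P => i ∈ P).card
            = ∑ P ∈ Pant, (G.filter fun i => i ∈ P).card := aux_swap Pant G
          _ ≤ ∑ P ∈ Pant, (u ⟨f0,v0⟩ + (C.filter fun i => i ∈ P).card) :=
              Finset.sum_le_sum e3
          _ = Pant.card * u ⟨f0,v0⟩ + ∑ P ∈ Pant, (C.filter fun i => i ∈ P).card := by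
              rw [Finset.sum_add_distrib, Finset.sum_const, smul_eq_mul]
          _ = Pant.card * u ⟨f0,v0⟩ + ∑ i ∈ C, (Pant.filter fun P => i ∈ P).card := by
              rw [aux_swap Pant C]
      have e5 : ((∑ i ∈ G, (Pant.filter fun P => i ∈ P).card : ℕ) : ℝ)
          ≤ (Pant.card : ℝ) * u ⟨f0,v0⟩
            + ∑ i ∈ C, ((Pant.filter fun P => i ∈ P).card : ℝ) := by
        have := e4
        push_cast
        exact_mod_cast this
      rw [add_mul]
      have : (u ⟨f0,v0⟩ : ℝ) * Pant.card = (Pant.card : ℝ) * u ⟨f0,v0⟩ := by ring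
      linarith
    rw [Finset.sum_sub_distrib]
    linarith
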